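/- For real x sufficiently large, define α₁(x) = ((x−1)/(x·log x))·(1 − (1 − (log x)/(x−1))^x) (with real exponent), α(x) = (1 − α₁(x))/(x−1), and T̂(x) = (1/(2α₁(x)²))·( x·α₁(x)² + 1 − (x·α(x))² + √((x·α₁(x)² + 1 − (x·α(x))²)² + 4·α(x)²·α₁(x)²·x³) ). Then T̂(x) − x is asymptotically equivalent to (log x)² as x → ∞, i.e., (T̂(x) − x)/(log x)² → 1. -/

import Mathlib

open Filter Real

/-- Expected self-aggregation weight in DivShare with `n = x` nodes and fan-out `J = log x`
(real exponent): `α₁(x) = ((x−1)/(x·log x))·(1 − (1 − (log x)/(x−1))^x)`. -/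
noncomputable def divshareAlpha1 (x : ℝ) : ℝ :=
  ((x - 1) / (x * Real.log x)) * (1 - (1 - Real.log x / (x - 1)) ^ x)

/-- Expected weight assigned to each other node: `α(x) = (1 − α₁(x))/(x−1)`. -/
noncomputable def divshareAlpha (x : ℝ) : ℝ :=
  (1 - divshareAlpha1 x) / (x - 1)

/-- The threshold `T̂(x)` on the total communication delay coming from the
straggling–communication balance condition. -/
noncomputable def divshareThat (x : ℝ) : ℝ :=
  (1 / (2 * divshareAlpha1 x ^ 2)) *
    (x * divshareAlpha1 x ^ 2 + 1 - (x * divshareAlpha x) ^ 2 +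
      Real.sqrt ((x * divshareAlpha1 x ^ 2 + 1 - (x * divshareAlpha x) ^ 2) ^ 2 +
        4 * divshareAlpha x ^ 2 * divshareAlpha1 x ^ 2 * x ^ 3))

/-- In the partial-communication regime `J = log x`, the admissible total excess
straggling satisfies `T̂(x) − x ∼ (log x)²` as `x → ∞`. -/
lemma gtend : Tendsto (fun x : ℝ => (1 - Real.log x / (x - 1)) ^ x) atTop (nhds 0) := by
  have h0 : ∀ᶠ x : ℝ in atTop, (0:ℝ) ≤ (1 - Real.log x / (x - 1)) ^ x := by
    filter_upwards [eventually_ge_atTop (3:ℝ)] with x hx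
    have h1 : Real.log x ≤ x - 1 := Real.log_le_sub_one_of_pos (by linarith)
    have h2 : (0:ℝ) < x - 1 := by linarith
    have : Real.log x / (x - 1) ≤ 1 := by rw [div_le_one h2]; linarith
    exact Real.rpow_nonneg (by linarith) x
  have h1 : ∀ᶠ x : ℝ in atTop, (1 - Real.log x / (x - 1)) ^ x ≤ x⁻¹ := by
    filter_upwards [eventually_ge_atTop (3:ℝ)] with x hx
    have hx1 : (0:ℝ) < x - 1 := by linarith
    have hlx : 0 < Real.log x := Real.log_pos (by linarith)
    have hlt : Real.log x < x - 1 := Real.log_lt_sub_one_of_pos (by linarith) (by linarith)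
    have ht : Real.log x / (x - 1) < 1 := by rw [div_lt_one hx1]; exact hlt
    have htpos : 0 < Real.log x / (x - 1) := div_pos hlx hx1
    have hb : 0 < 1 - Real.log x / (x - 1) := by linarith
    rw [Real.rpow_def_of_pos hb]
    have hlog : Real.log (1 - Real.log x / (x - 1)) ≤ -(Real.log x / (x - 1)) := by
      have := Real.log_le_sub_one_of_pos hb
      linarith
    have hmul : Real.log (1 - Real.log x / (x - 1)) * x ≤ -(Real.log x / (x - 1)) * x :=
      mul_le_mul_of_nonneg_right hlog (by linarith)
    have hstep : -(Real.log x / (x - 1)) * x ≤ -Real.log x := by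
      rw [neg_mul, neg_le_neg_iff, div_mul_eq_mul_div, le_div_iff₀ hx1]
      nlinarith
    calc rexp (Real.log (1 - Real.log x / (x - 1)) * x) ≤ rexp (-Real.log x) :=
          Real.exp_le_exp.mpr (by linarith)
      _ = x⁻¹ := by rw [Real.exp_neg, Real.exp_log (by linarith)]
  exact tendsto_of_tendsto_of_tendsto_of_le_of_le' tendsto_const_nhds
    tendsto_inv_atTop_zero h0 h1

lemma utend : Tendsto (fun x : ℝ => divshareAlpha1 x * Real.log x) atTop (nhds 1) := by
  have heq : ∀ᶠ x : ℝ in atTop, ((x - 1) / x) * (1 - (1 - Real.log x / (x - 1)) ^ x)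
      = divshareAlpha1 x * Real.log x := by
    filter_upwards [eventually_ge_atTop (3:ℝ)] with x hx
    have hl : Real.log x ≠ 0 := ne_of_gt (Real.log_pos (by linarith))
    have hx0 : (x:ℝ) ≠ 0 := by linarith
    unfold divshareAlpha1
    field_simp
  have h1 : Tendsto (fun x : ℝ => (x - 1) / x) atTop (nhds 1) := by
    have : Tendsto (fun x : ℝ => 1 - x⁻¹) atTop (nhds (1 - 0)) :=
      tendsto_const_nhds.sub tendsto_inv_atTop_zero
    refine (this.congr' ?_).mono_right (by norm_num)
    filter_upwards [eventually_ge_atTop (1:ℝ)] with x hx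
    field_simp
  have h2 : Tendsto (fun x : ℝ => 1 - (1 - Real.log x / (x - 1)) ^ x) atTop (nhds 1) := by
    have : Tendsto (fun x : ℝ => (1:ℝ) - (1 - Real.log x / (x - 1)) ^ x) atTop (nhds (1 - 0)) := tendsto_const_nhds.sub gtend
    simpa using this
  have := h1.mul h2
  rw [one_mul] at this
  exact this.congr' heq

lemma a1tend : Tendsto (fun x : ℝ => divshareAlpha1 x) atTop (nhds 0) := by
  have heq : ∀ᶠ x : ℝ in atTop,
      (divshareAlpha1 x * Real.log x) * (Real.log x)⁻¹ = divshareAlpha1 x := by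
    filter_upwards [eventually_ge_atTop (3:ℝ)] with x hx
    have hl : Real.log x ≠ 0 := ne_of_gt (Real.log_pos (by linarith))
    field_simp
  have hinv : Tendsto (fun x : ℝ => (Real.log x)⁻¹) atTop (nhds 0) :=
    (Real.tendsto_log_atTop.inv_tendsto_atTop)
  have := utend.mul hinv
  rw [one_mul] at this
  exact this.congr' heq

lemma wtend : Tendsto (fun x : ℝ => x * divshareAlpha x) atTop (nhds 1) := by
  have heq : ∀ᶠ x : ℝ in atTop,
      ((x - 1) / x)⁻¹ * (1 - divshareAlpha1 x) = x * divshareAlpha x := by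
    filter_upwards [eventually_ge_atTop (3:ℝ)] with x hx
    have hx0 : (x:ℝ) ≠ 0 := by linarith
    have hx1 : (x:ℝ) - 1 ≠ 0 := by linarith
    unfold divshareAlpha
    field_simp
  have h1 : Tendsto (fun x : ℝ => (x - 1) / x) atTop (nhds 1) := by
    have : Tendsto (fun x : ℝ => 1 - x⁻¹) atTop (nhds (1 - 0)) :=
      tendsto_const_nhds.sub tendsto_inv_atTop_zero
    refine (this.congr' ?_).mono_right (by norm_num)
    filter_upwards [eventually_ge_atTop (1:ℝ)] with x hx
    field_simp
  have h2 : Tendsto (fun x : ℝ => 1 - divshareAlpha1 x) atTop (nhds (1 - 0)) :=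
    tendsto_const_nhds.sub a1tend
  have h2' : Tendsto (fun x : ℝ => 1 - divshareAlpha1 x) atTop (nhds 1) := by simpa using h2
  have := (h1.inv₀ one_ne_zero).mul h2'
  rw [inv_one, one_mul] at this
  exact this.congr' heq

lemma a1pos : ∀ᶠ x : ℝ in atTop, 0 < divshareAlpha1 x := by
  have hu := utend.eventually (lt_mem_nhds (show (1:ℝ)/2 < 1 by norm_num))
  filter_upwards [hu, eventually_ge_atTop (3:ℝ)] with x hux hx
  have hl : 0 < Real.log x := Real.log_pos (by linarith)
  nlinarith

noncomputable def qq (x : ℝ) : ℝ := (1 - (x * divshareAlpha x) ^ 2) / (x * divshareAlpha1 x ^ 2)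

noncomputable def pp (x : ℝ) : ℝ := (x * divshareAlpha x) ^ 2 / (x * divshareAlpha1 x ^ 2)

lemma ldiv1 : Tendsto (fun x : ℝ => Real.log x / (x - 1)) atTop (nhds 0) := by
  have := Real.tendsto_pow_log_div_mul_add_atTop 1 (-1) 1 one_ne_zero
  simpa [sub_eq_add_neg] using this

lemma ldiv0 : Tendsto (fun x : ℝ => Real.log x / x) atTop (nhds 0) := by
  have := Real.tendsto_pow_log_div_mul_add_atTop 1 0 1 one_ne_zero
  simpa using this

lemma l2div : Tendsto (fun x : ℝ => (Real.log x) ^ 2 / x) atTop (nhds 0) := by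
  have := Real.tendsto_pow_log_div_mul_add_atTop 1 0 2 one_ne_zero
  simpa using this

lemma qqtend : Tendsto qq atTop (nhds 0) := by
  have heq : ∀ᶠ x : ℝ in atTop,
      (1 + x * divshareAlpha x) *
        ((divshareAlpha1 x * Real.log x) * (Real.log x / (x - 1))
          - (Real.log x / x) * (Real.log x / (x - 1)))
        / (divshareAlpha1 x * Real.log x) ^ 2 = qq x := by
    filter_upwards [a1pos, eventually_ge_atTop (3:ℝ)] with x ha1 hx
    have hx0 : (x:ℝ) ≠ 0 := by linarith
    have hx1 : (x:ℝ) - 1 ≠ 0 := by linarith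
    have hl : Real.log x ≠ 0 := ne_of_gt (Real.log_pos (by linarith))
    have ha1' : divshareAlpha1 x ≠ 0 := ne_of_gt ha1
    unfold qq divshareAlpha
    field_simp
    ring
  have hnum : Tendsto (fun x : ℝ => (1 + x * divshareAlpha x) *
      ((divshareAlpha1 x * Real.log x) * (Real.log x / (x - 1))
        - (Real.log x / x) * (Real.log x / (x - 1)))) atTop (nhds 0) := by
    have h1 : Tendsto (fun x : ℝ => 1 + x * divshareAlpha x) atTop (nhds (1 + 1)) :=
      tendsto_const_nhds.add wtend
    have h2 : Tendsto (fun x : ℝ => (divshareAlpha1 x * Real.log x) * (Real.log x / (x - 1))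
        - (Real.log x / x) * (Real.log x / (x - 1))) atTop (nhds (1 * 0 - 0 * 0)) :=
      (utend.mul ldiv1).sub (ldiv0.mul ldiv1)
    have := h1.mul h2
    simpa using this
  have := hnum.div (utend.pow 2) (by norm_num)
  simpa using this.congr' heq

lemma pptend : Tendsto pp atTop (nhds 0) := by
  have heq : ∀ᶠ x : ℝ in atTop,
      (x * divshareAlpha x) ^ 2 * ((Real.log x) ^ 2 / x)
        / (divshareAlpha1 x * Real.log x) ^ 2 = pp x := by
    filter_upwards [a1pos, eventually_ge_atTop (3:ℝ)] with x ha1 hx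
    have hx0 : (x:ℝ) ≠ 0 := by linarith
    have hl : Real.log x ≠ 0 := ne_of_gt (Real.log_pos (by linarith))
    have ha1' : divshareAlpha1 x ≠ 0 := ne_of_gt ha1
    unfold pp
    field_simp
  have hnum : Tendsto (fun x : ℝ => (x * divshareAlpha x) ^ 2 * ((Real.log x) ^ 2 / x))
      atTop (nhds 0) := by
    have := (wtend.pow 2).mul l2div
    simpa using this
  have := hnum.div (utend.pow 2) (by norm_num)
  simpa using this.congr' heq

noncomputable def EE (x : ℝ) : ℝ :=
  (Real.sqrt ((1 + qq x) ^ 2 + 4 * pp x) + 2 - (1 + qq x)) * (divshareAlpha1 x * Real.log x) ^ 2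

lemma EEtend : Tendsto EE atTop (nhds 2) := by
  have hin : Tendsto (fun x => (1 + qq x) ^ 2 + 4 * pp x) atTop (nhds 1) := by
    have hc : Tendsto (fun _ : ℝ => (1:ℝ)) atTop (nhds 1) := tendsto_const_nhds
    have := ((hc.add qqtend).pow 2).add (pptend.const_mul 4)
    norm_num at this
    exact this
  have hsq : Tendsto (fun x => Real.sqrt ((1 + qq x) ^ 2 + 4 * pp x)) atTop (nhds 1) := by
    have := (Real.continuous_sqrt.continuousAt (x := (1:ℝ))).tendsto.comp hin
    simpa [Function.comp_def] using this
  have h1 : Tendsto (fun x => Real.sqrt ((1 + qq x) ^ 2 + 4 * pp x) + 2 - (1 + qq x))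
      atTop (nhds 2) := by
    have hc : Tendsto (fun _ : ℝ => (1:ℝ)) atTop (nhds 1) := tendsto_const_nhds
    have := (hsq.add_const 2).sub (hc.add qqtend)
    norm_num at this
    exact this
  have := h1.mul (utend.pow 2)
  norm_num at this
  exact this.mono_right (by norm_num)

lemma eveq : ∀ᶠ x : ℝ in atTop,
    2 / EE x = (divshareThat x - x) / (Real.log x) ^ 2 := by
  filter_upwards [a1pos, eventually_ge_atTop (3:ℝ)] with x ha1 hx
  have hL : 0 < Real.log x := Real.log_pos (by linarith)
  have hx0 : (0:ℝ) < x := by linarith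
  set a1 := divshareAlpha1 x with ha1def
  set a := divshareAlpha x with hadef
  have hc1 : (0:ℝ) < x * a1 ^ 2 := by positivity
  have hq : x * a1 ^ 2 * qq x = 1 - (x * a) ^ 2 := by
    unfold qq; rw [← ha1def, ← hadef]; field_simp
  have hp : x * a1 ^ 2 * pp x = (x * a) ^ 2 := by
    unfold pp; rw [← ha1def, ← hadef]; field_simp
  have hS : (x * a1 ^ 2 + 1 - (x * a) ^ 2) ^ 2 + 4 * a ^ 2 * a1 ^ 2 * x ^ 3
      = (x * a1 ^ 2) ^ 2 * ((1 + qq x) ^ 2 + 4 * pp x) := by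
    linear_combination (-(2 * (x * a1 ^ 2) + (1 - (x * a) ^ 2) + (x * a1 ^ 2) * qq x)) * hq
      - 4 * (x * a1 ^ 2) * hp
  set s := Real.sqrt ((1 + qq x) ^ 2 + 4 * pp x) with hsdef
  have hppnn : 0 ≤ pp x := by
    unfold pp; positivity
  have hcnn : 0 ≤ (1 + qq x) ^ 2 + 4 * pp x := by positivity
  have hs2 : s ^ 2 = (1 + qq x) ^ 2 + 4 * pp x := Real.sq_sqrt hcnn
  have hsnn : 0 ≤ s := Real.sqrt_nonneg _
  have hsum : x * a1 ^ 2 * (qq x + pp x) = 1 := by linarith [hq, hp]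
  have hqp : 0 < qq x + pp x := by nlinarith
  have hspos : 0 < s + 1 - qq x := by nlinarith
  have hsqrtS : Real.sqrt ((x * a1 ^ 2 + 1 - (x * a) ^ 2) ^ 2 + 4 * a ^ 2 * a1 ^ 2 * x ^ 3)
      = x * a1 ^ 2 * s := by
    rw [hS, Real.sqrt_mul (sq_nonneg _), Real.sqrt_sq hc1.le]
  have hT : divshareThat x - x = x * (s + qq x - 1) / 2 := by
    unfold divshareThat
    rw [← ha1def, ← hadef, hsqrtS]
    field_simp
    linear_combination (-1 : ℝ) * hq
  rw [hT]
  unfold EE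
  rw [← ha1def, ← hsdef]
  have hEpos : (0:ℝ) < (s + 2 - (1 + qq x)) * (a1 * Real.log x) ^ 2 := by
    have h1 : (0:ℝ) < s + 2 - (1 + qq x) := by linarith
    have h2 : (0:ℝ) < (a1 * Real.log x) ^ 2 := by positivity
    exact mul_pos h1 h2
  rw [div_eq_div_iff hEpos.ne' (by positivity : ((Real.log x) ^ 2 : ℝ) ≠ 0)]
  have hkey : (s + qq x - 1) * (s + 1 - qq x) = 4 * (qq x + pp x) := by
    linear_combination hs2
  linear_combination (-(x * a1 ^ 2 * (Real.log x) ^ 2 / 2)) * hkey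
    - 2 * (Real.log x) ^ 2 * hsum

theorem partial_communication_threshold_asymptotics :
    Tendsto (fun x : ℝ => (divshareThat x - x) / (Real.log x) ^ 2) atTop (nhds 1) := by
  have h2 : Tendsto (fun x => 2 / EE x) atTop (nhds 1) := by
    have hc : Tendsto (fun _ : ℝ => (2:ℝ)) atTop (nhds 2) := tendsto_const_nhds
    have := hc.div EEtend two_ne_zero
    norm_num at this
    exact this
  exact h2.congr' eveq
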